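/- For every λ ∈ [0,1] and every positive integer k, the k-fold Minkowski sum of S_λ satisfies k × S_λ ⊆ S_λ^k (as subsets of ℝ/ℤ). -/

import Mathlib

open MeasureTheory Real Set Filter Topology ENNReal

noncomputable section

/-- The index set `K_λ^k = {m ∈ ℕ : ∃ j ∈ ℕ*, 2^j ≤ m ≤ 2^j(1+λ+1/j) - k + 1}`. -/
def Kset (lam : ℝ) (k : ℕ) : Set ℕ :=
  {m | ∃ j : ℕ, 0 < j ∧ (2 : ℝ) ^ j ≤ (m : ℝ) ∧
    (m : ℝ) ≤ (2 : ℝ) ^ j * (1 + lam + 1 / (j : ℝ)) - (k : ℝ) + 1}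

/-- The Cantor-type set `S_λ^k ⊆ ℝ/ℤ`: binary expansions `x = ∑ x_i 2^{-(i+1)}`
with digits `x_i ∈ {0,1}` vanishing on `K_λ^k`. -/
def Sset (lam : ℝ) (k : ℕ) : Set (AddCircle (1 : ℝ)) :=
  {y | ∃ x : ℕ → ℕ, (∀ i, x i ≤ 1) ∧ (∀ i ∈ Kset lam k, x i = 0) ∧
    y = ((∑' i : ℕ, (x i : ℝ) / 2 ^ (i + 1) : ℝ) : AddCircle (1 : ℝ))}

/-- The `k`-fold Minkowski sum `k × E = E + ⋯ + E` in `ℝ/ℤ`. -/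
def kFold1 (k : ℕ) (E : Set (AddCircle (1 : ℝ))) : Set (AddCircle (1 : ℝ)) :=
  {x | ∃ g : Fin k → AddCircle (1 : ℝ), (∀ i, g i ∈ E) ∧ x = ∑ i, g i}

/-- Fourier coefficient `μ̂(n)` of a measure on `ℝ/ℤ`. -/
def muHat1 (μ : Measure (AddCircle (1 : ℝ))) (n : ℤ) : ℂ :=
  ∫ t, fourier (-n) t ∂μ

/-- The `α`-energy `I_α(μ) = ∑_{n ≥ 1} |μ̂(n)|²/(1+n)^{1-α}` of `μ` is finite. -/
def HasFiniteEnergy1 (α : ℝ) (μ : Measure (AddCircle (1 : ℝ))) : Prop :=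
  Summable fun n : ℕ => ‖muHat1 μ (n + 1)‖ ^ 2 / (1 + ((n : ℝ) + 1)) ^ (1 - α)

/-- `C_α(E) = 0`: every probability measure supported on a compact subset of `E`
has infinite `α`-energy. -/
def CapacityZero1 (α : ℝ) (E : Set (AddCircle (1 : ℝ))) : Prop :=
  ∀ μ : Measure (AddCircle (1 : ℝ)), IsProbabilityMeasure μ →
    (∃ K, K ⊆ E ∧ IsCompact K ∧ μ Kᶜ = 0) → ¬ HasFiniteEnergy1 α μ

lemma myCoeSum {n : ℕ} (v : Fin n → ℝ) :
    ((∑ l, v l : ℝ) : AddCircle (1:ℝ)) = ∑ l, ((v l : ℝ) : AddCircle (1:ℝ)) :=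
  map_sum (QuotientAddGroup.mk' _) v Finset.univ

lemma myCoeSub (a b : ℝ) :
    ((a - b : ℝ) : AddCircle (1:ℝ)) = ((a:ℝ) : AddCircle (1:ℝ)) - ((b:ℝ) : AddCircle (1:ℝ)) :=
  map_sub (QuotientAddGroup.mk' _) a b

lemma mySummable {f : ℕ → ℝ} (C : ℝ) (h0 : ∀ i, 0 ≤ f i) (h : ∀ i, f i ≤ C / 2 ^ (i+1)) :
    Summable f := by
  apply Summable.of_nonneg_of_le h0 h
  have : (fun i : ℕ => C / 2 ^ (i+1)) = fun i : ℕ => (C/2) * (1/2 : ℝ) ^ i := by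
    funext i; rw [pow_succ, one_div_pow]; ring
  rw [this]
  exact (summable_geometric_of_lt_one (by norm_num) (by norm_num)).mul_left _

lemma myGeom (C : ℝ) (k : ℕ) : ∑' i : ℕ, C / 2 ^ (i + k + 1) = C / 2 ^ k := by
  have : (fun i : ℕ => C / 2 ^ (i + k + 1)) = fun i : ℕ => (C / 2 ^ (k+1)) * (1/2 : ℝ) ^ i := by
    funext i
    rw [show i + k + 1 = (k + 1) + i by ring, pow_add, div_pow, one_pow]
    rw [div_mul_div_comm, mul_one]
  rw [this, tsum_mul_left, tsum_geometric_of_lt_one (by norm_num) (by norm_num)]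
  have h2 : ((1:ℝ) - 1/2)⁻¹ = 2 := by norm_num
  rw [h2, pow_succ]
  ring

lemma myWindow {lam : ℝ} {k m τ : ℕ} (hm : m ∈ Kset lam k) (hτ : τ < k) :
    m + τ ∈ Kset lam 1 := by
  obtain ⟨j, hj, h2, h3⟩ := hm
  have hτ' : (τ : ℝ) + 1 ≤ (k : ℝ) := by exact_mod_cast hτ
  exact ⟨j, hj, by push_cast; linarith, by push_cast; linarith⟩

lemma myPowMem {lam : ℝ} (h0 : 0 ≤ lam) {j : ℕ} (hj : 0 < j) : 2 ^ j ∈ Kset lam 1 := by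
  refine ⟨j, hj, le_of_eq (by push_cast; ring), ?_⟩
  have hjp : (0:ℝ) < 1 / (j:ℝ) := by positivity
  have h2p : (0:ℝ) < 2 ^ j := by positivity
  push_cast
  nlinarith

lemma myDigitEq (t : ℝ) (i : ℕ) :
    ⌊t * 2 ^ (i+1)⌋ - 2 * ⌊t * 2 ^ i⌋ = ⌊2 * Int.fract (t * 2 ^ i)⌋ := by
  have h : t * 2 ^ (i+1) = 2 * Int.fract (t * 2 ^ i) + ((2 * ⌊t * 2 ^ i⌋ : ℤ) : ℝ) := by
    have := Int.self_sub_floor (t * 2 ^ i)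
    push_cast
    rw [pow_succ]
    linarith
  rw [h, Int.floor_add_intCast]
  omega

lemma myTwoMul (k : ℕ) (hk : 0 < k) : 2 * k ≤ 2 ^ k := by
  induction k with
  | zero => omega
  | succ n ih =>
    rcases Nat.eq_zero_or_pos n with h | h
    · subst h; norm_num
    · have h2 : 2 ≤ 2 ^ n := by
        calc 2 ≤ 2 * n := by omega
        _ ≤ 2 ^ n := ih h
      rw [pow_succ]
      omega

/-- the binary expansion of `t ∈ [0,1)` via floors sums to `t`. -/

lemma myExpansion (t : ℝ) (h0 : 0 ≤ t) (h1 : t < 1) :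
    ∑' i : ℕ, (((⌊t * 2 ^ (i+1)⌋ - 2 * ⌊t * 2 ^ i⌋).toNat : ℝ) / 2 ^ (i+1)) = t := by
  set f : ℕ → ℝ := fun i => (((⌊t * 2 ^ (i+1)⌋ - 2 * ⌊t * 2 ^ i⌋).toNat : ℝ) / 2 ^ (i+1)) with hf
  have hdig : ∀ i, (0:ℤ) ≤ ⌊t * 2 ^ (i+1)⌋ - 2 * ⌊t * 2 ^ i⌋ ∧
      ⌊t * 2 ^ (i+1)⌋ - 2 * ⌊t * 2 ^ i⌋ ≤ 1 := by
    intro i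
    rw [myDigitEq]
    constructor
    · exact Int.floor_nonneg.mpr (by have := Int.fract_nonneg (t * 2 ^ i); linarith)
    · have h1 := Int.fract_lt_one (t * 2 ^ i)
      have h3 : ⌊2 * Int.fract (t * (2:ℝ) ^ i)⌋ < (2:ℤ) := by
        apply Int.floor_lt.mpr; push_cast; linarith
      omega
  -- telescoping partial sums
  have hterm : ∀ i, f i = (⌊t * 2 ^ (i+1)⌋ : ℝ) / 2 ^ (i+1) - (⌊t * 2 ^ i⌋ : ℝ) / 2 ^ i := by
    intro i
    have hd := hdig i
    have hcast : (((⌊t * 2 ^ (i+1)⌋ - 2 * ⌊t * 2 ^ i⌋).toNat : ℤ) : ℝ)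
        = (⌊t * 2 ^ (i+1)⌋ : ℝ) - 2 * (⌊t * 2 ^ i⌋ : ℝ) := by
      rw [Int.toNat_of_nonneg hd.1]; push_cast; ring
    rw [hf]
    simp only
    rw [show (((⌊t * 2 ^ (i+1)⌋ - 2 * ⌊t * 2 ^ i⌋).toNat : ℕ) : ℝ)
        = (((⌊t * 2 ^ (i+1)⌋ - 2 * ⌊t * 2 ^ i⌋).toNat : ℤ) : ℝ) by push_cast; ring, hcast]
    rw [pow_succ]
    field_simp
  have hF0 : (⌊t * 2 ^ (0:ℕ)⌋ : ℝ) / 2 ^ (0:ℕ) = 0 := by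
    have : ⌊t * 2 ^ (0:ℕ)⌋ = 0 := by
      rw [Int.floor_eq_zero_iff]
      constructor <;> simp <;> [linarith; linarith]
    rw [this]; simp
  have hpart : ∀ n, ∑ i ∈ Finset.range n, f i = (⌊t * 2 ^ n⌋ : ℝ) / 2 ^ n := by
    intro n
    have h := Finset.sum_range_sub (fun j => (⌊t * (2:ℝ) ^ j⌋ : ℝ) / 2 ^ j) n
    beta_reduce at h
    rw [Finset.sum_congr rfl (fun i _ => hterm i), h, hF0]
    ring
  -- partial sums tend to t
  have htend : Tendsto (fun n => ∑ i ∈ Finset.range n, f i) atTop (nhds t) := by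
    have hdiff : Tendsto (fun n : ℕ => t - (⌊t * 2 ^ n⌋ : ℝ) / 2 ^ n) atTop (nhds 0) := by
      apply squeeze_zero (g := fun n : ℕ => (1/2) ^ n)
      · intro n
        have h := Int.floor_le (t * 2 ^ n)
        have h2 : (0:ℝ) < 2 ^ n := by positivity
        rw [sub_nonneg, div_le_iff₀ h2]
        linarith
      · intro n
        have h := Int.lt_floor_add_one (t * 2 ^ n)
        have h2 : (0:ℝ) < 2 ^ n := by positivity
        rw [div_pow, one_pow, sub_le_iff_le_add, ← add_div, le_div_iff₀ h2]
        linarith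
      · exact tendsto_pow_atTop_nhds_zero_of_lt_one (by norm_num) (by norm_num)
    have := hdiff.const_sub t
    simp only [sub_zero, _root_.sub_sub_cancel] at this
    have heq : (fun n : ℕ => (⌊t * 2 ^ n⌋ : ℝ) / 2 ^ n)
        = fun n => ∑ i ∈ Finset.range n, f i := by
      funext n; rw [hpart]
    rw [heq] at this
    exact this
  have hsum : Summable f := by
    apply mySummable 1
    · intro i; rw [hf]; positivity
    · intro i
      have hd := hdig i
      rw [hf]
      simp only
      have hd := hdig i
      have hn : (⌊t * 2 ^ (i+1)⌋ - 2 * ⌊t * 2 ^ i⌋).toNat ≤ 1 := by omega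
      have hn' : (((⌊t * 2 ^ (i+1)⌋ - 2 * ⌊t * 2 ^ i⌋).toNat : ℕ) : ℝ) ≤ 1 := by
        exact_mod_cast hn
      gcongr
  exact tendsto_nhds_unique (hsum.hasSum.tendsto_sum_nat) htend

lemma myDigitBound (t : ℝ) (i : ℕ) :
    (0:ℤ) ≤ ⌊t * 2 ^ (i+1)⌋ - 2 * ⌊t * 2 ^ i⌋ ∧ ⌊t * 2 ^ (i+1)⌋ - 2 * ⌊t * 2 ^ i⌋ ≤ 1 := by
  rw [myDigitEq]
  constructor
  · exact Int.floor_nonneg.mpr (by have := Int.fract_nonneg (t * 2 ^ i); linarith)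
  · have h1 := Int.fract_lt_one (t * 2 ^ i)
    have h3 : ⌊2 * Int.fract (t * (2:ℝ) ^ i)⌋ < (2:ℤ) := by
      apply Int.floor_lt.mpr; push_cast; linarith
    omega

/-- Lemma 3.4(1): for every `λ ∈ [0,1]` and positive integer
`k`, the `k`-fold Minkowski sum satisfies `k × S_λ ⊆ S_λ^k` in `ℝ/ℤ`. -/
theorem stmt14 (lam : ℝ) (h0 : 0 ≤ lam) (h1 : lam ≤ 1) (k : ℕ) (hk : 0 < k) :
    kFold1 k (Sset lam 1) ⊆ Sset lam k := by
  rintro y ⟨g, hg, rfl⟩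
  choose d hb hz hv using hg
  classical
  set c : ℕ → ℕ := fun i => ∑ l : Fin k, d l i with hc
  have hckn : ∀ i, c i ≤ k := by
    intro i
    calc ∑ l : Fin k, d l i ≤ ∑ _l : Fin k, 1 := Finset.sum_le_sum (fun l _ => hb l i)
      _ = k := by simp
  have hck : ∀ i, (c i : ℝ) ≤ k := fun i => by exact_mod_cast hckn i
  have hc0 : ∀ m ∈ Kset lam 1, c m = 0 := fun m hm =>
    Finset.sum_eq_zero (fun l _ => hz l m hm)
  have hsl : ∀ l : Fin k, Summable (fun i => (d l i : ℝ) / 2 ^ (i+1)) := fun l =>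
    mySummable 1 (fun i => by positivity)
      (fun i => by gcongr; exact_mod_cast hb l i)
  set x : ℝ := ∑' i, (c i : ℝ) / 2 ^ (i+1) with hxdef
  have hsx : Summable (fun i => (c i : ℝ)/2^(i+1)) :=
    mySummable k (fun i => by positivity) (fun i => by gcongr; exact hckn i)
  have hgx : ∑ l, g l = ((x : ℝ) : AddCircle (1:ℝ)) := by
    have h1 : ∑ l, g l
        = ∑ l : Fin k, (((∑' i, (d l i : ℝ)/2^(i+1)) : ℝ) : AddCircle (1:ℝ)) :=
      Finset.sum_congr rfl (fun l _ => hv l)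
    rw [h1, ← myCoeSum]
    congr 1
    rw [hxdef, ← Summable.tsum_finsetSum (fun l _ => hsl l)]
    apply tsum_congr
    intro i
    rw [hc]
    push_cast
    rw [Finset.sum_div]
  set t := Int.fract x with ht
  have ht0 : 0 ≤ t := Int.fract_nonneg x
  have ht1 : t < 1 := Int.fract_lt_one x
  refine ⟨fun i => (⌊t * 2 ^ (i+1)⌋ - 2 * ⌊t * 2 ^ i⌋).toNat, ?_, ?_, ?_⟩
  · intro i
    have := myDigitBound t i
    dsimp only
    omega
  · intro m hm
    -- fract (t * 2^m) = u < 1/2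
    set u : ℝ := ∑' i, (c (i + m) : ℝ)/2^(i+1) with hu
    have hsu : Summable (fun i => (c (i+m):ℝ)/2^(i+1)) :=
      mySummable k (fun i => by positivity) (fun i => by gcongr; exact hckn _)
    have hwin : ∀ i, i < k → c (i + m) = 0 := fun i hi => by
      rw [add_comm]; exact hc0 _ (myWindow hm hi)
    set G : ℕ → ℝ := fun i => if i < k then 0 else (k:ℝ)/2^(i+1) with hG
    have hGnn : ∀ i, 0 ≤ G i := by
      intro i; rw [hG]; dsimp only; split
      · exact le_refl 0
      · positivity
    have hG_le : ∀ i, G i ≤ (k:ℝ)/2^(i+1) := by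
      intro i; rw [hG]; dsimp only; split
      · positivity
      · exact le_refl _
    have hsG : Summable G := mySummable k hGnn hG_le
    have hfG : ∀ i, (c (i+m):ℝ)/2^(i+1) ≤ G i := by
      intro i
      by_cases hik : i < k
      · rw [hwin i hik, hG]; simp [hik]
      · rw [hG]; dsimp only; rw [if_neg hik]; gcongr; exact hckn _
    have hj0 : m + k < 2 ^ (m + k + 1) :=
      lt_of_lt_of_le (Nat.lt_two_pow_self (n := m+k)) (Nat.pow_le_pow_right (by norm_num) (by omega))
    set i0 : ℕ := 2 ^ (m + k + 1) - m with hi0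
    have hi0k : k < i0 := by omega
    have hi0m : i0 + m = 2 ^ (m + k + 1) := by omega
    have hci0 : c (i0 + m) = 0 := by
      rw [hi0m]; exact hc0 _ (myPowMem h0 (by omega : 0 < m + k + 1))
    have hstrict : (c (i0+m):ℝ)/2^(i0+1) < G i0 := by
      rw [hci0, hG]; dsimp only; rw [if_neg (by omega)]
      have hk' : (0:ℝ) < (k:ℝ) := by exact_mod_cast hk
      simp only [Nat.cast_zero, zero_div]
      exact div_pos hk' (by positivity)
    have hult : u < ∑' i, G i := Summable.tsum_lt_tsum hfG hstrict hsu hsG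
    have hGsum : ∑' i, G i = (k:ℝ)/2^k := by
      have hsplitG := Summable.sum_add_tsum_nat_add (f := G) k hsG
      have hz1 : ∑ i ∈ Finset.range k, G i = 0 :=
        Finset.sum_eq_zero (fun i hi => by rw [hG]; simp [Finset.mem_range.mp hi])
      have hz2 : ∑' i, G (i + k) = ∑' i : ℕ, (k:ℝ)/2^(i+k+1) :=
        tsum_congr (fun i => by rw [hG]; dsimp only; rw [if_neg (by omega)])
      rw [hz1, zero_add, hz2] at hsplitG
      rw [← hsplitG, myGeom]
    have hhalf : (k:ℝ)/2^k ≤ 1/2 := by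
      have h2k : (2*k:ℕ) ≤ 2^k := myTwoMul k hk
      have h2k' : (2:ℝ)*k ≤ 2^k := by exact_mod_cast h2k
      rw [div_le_div_iff₀ (by positivity) (by norm_num)]
      linarith
    have hu2 : u < 1/2 := by rw [hGsum] at hult; linarith
    have hu0 : 0 ≤ u := tsum_nonneg (fun i => by positivity)
    have hsplit := Summable.sum_add_tsum_nat_add (f := fun i => (c i:ℝ)/2^(i+1)) m hsx
    have htail : ∑' i, (c (i+m):ℝ)/2^((i+m)+1) = u / 2^m := by
      have e1 : ∑' i, (c (i+m):ℝ)/2^((i+m)+1)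
          = ∑' i, ((c (i+m):ℝ)/2^(i+1)) * (1/2^m) :=
        tsum_congr (fun i => by
          rw [show i+m+1 = (i+1)+m by ring, pow_add]; ring)
      rw [e1, tsum_mul_right, ← hu]; ring
    set A : ℕ := ∑ i ∈ Finset.range m, c i * 2^(m - 1 - i) with hA
    have hhead : (∑ i ∈ Finset.range m, (c i:ℝ)/2^(i+1)) * 2^m = (A:ℝ) := by
      rw [hA]; push_cast; rw [Finset.sum_mul]
      apply Finset.sum_congr rfl
      intro i hi
      have him : i < m := Finset.mem_range.mp hi
      have h2 : (2:ℝ)^m = 2^(i+1) * 2^(m-1-i) := by rw [← pow_add]; congr 1; omega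
      rw [h2]
      have h3 : ((2:ℝ)^(i+1)) ≠ 0 := by positivity
      field_simp
    have hx2m : x * 2^m = (A:ℝ) + u := by
      rw [hxdef, ← hsplit, add_mul, htail, hhead, div_mul_cancel₀ _ (by positivity : ((2:ℝ)^m) ≠ 0)]
    have hfract : Int.fract (t * 2^m) = u := by
      have hfx : x - (⌊x⌋:ℝ) = t := Int.self_sub_floor x
      have hN : t * 2^m = u + (((A:ℤ) - ⌊x⌋ * 2^m : ℤ) : ℝ) := by
        push_cast
        rw [← hfx, sub_mul, hx2m]
        ring
      rw [hN, Int.fract_add_intCast, Int.fract_eq_self.mpr ⟨hu0, by linarith⟩]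
    have hde := myDigitEq t m
    have hfloor : ⌊2 * Int.fract (t * 2^m)⌋ = 0 := by
      rw [hfract, Int.floor_eq_zero_iff]
      exact ⟨by linarith, by linarith⟩
    dsimp only
    omega
  · rw [hgx]
    have hxt : ((x:ℝ) : AddCircle (1:ℝ)) = ((t:ℝ):AddCircle (1:ℝ)) := by
      have hsub : ((x - t : ℝ) : AddCircle (1:ℝ)) = 0 := by
        apply (AddCircle.coe_eq_zero_iff (1:ℝ)).mpr
        refine ⟨⌊x⌋, ?_⟩
        rw [zsmul_eq_mul, mul_one, ht]
        have := Int.self_sub_floor x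
        linarith
      rw [myCoeSub] at hsub
      exact sub_eq_zero.mp hsub
    rw [hxt]
    congr 1
    exact (myExpansion t ht0 ht1).symm

end
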